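/- For every k ≥ 3 there exists a simple countable k-uniform hypergraph H=(V,E) that has property C_2 but contains no infinite (k−1)-branching tree. -/
import Mathlib


/-- Property `C_ℓ` of a `k`-uniform hypergraph with edge set `E`: there is a nonempty set of
vertices `V'` such that every `v ∈ V'` lies in infinitely many edges `e` with `|V' ∩ e| ≥ ℓ`. -/
def PropC {V : Type*} (E : Set (Finset V)) (ℓ : ℕ) : Prop :=
  ∃ V' : Set V, V'.Nonempty ∧
    ∀ v ∈ V', {e | e ∈ E ∧ v ∈ e ∧ ℓ ≤ ((e : Set V) ∩ V').ncard}.Infinite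

/-- The `i`-th edge of the infinite loose path with vertex sequence `w` (0-indexed):
`{w ((k-1)i), w ((k-1)i + 1), …, w ((k-1)i + k - 1)}`. -/
def looseEdge {V : Type*} [DecidableEq V] (k : ℕ) (w : ℕ → V) (i : ℕ) : Finset V :=
  (Finset.range k).image fun j => w ((k - 1) * i + j)

/-- The edge of an infinite `(k-1)`-branching tree `x` at the node indexed by
the finite sequence `s`: `{x s} ∪ {x (a :: s) | a ∈ Fin (k-1)}`. -/
def treeEdge {V : Type*} [DecidableEq V] (k : ℕ) (x : List (Fin (k - 1)) → V)
    (s : List (Fin (k - 1))) : Finset V :=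
  insert (x s) (Finset.univ.image fun a : Fin (k - 1) => x (a :: s))

/-- A hypergraph is simple if any two distinct vertices lie together in at most one edge. -/
def SimpleHyper {V : Type*} (E : Set (Finset V)) : Prop :=
  ∀ e ∈ E, ∀ f ∈ E, ∀ u v : V, u ≠ v → u ∈ e → v ∈ e → u ∈ f → v ∈ f → e = f

/-- The edge on main vertices `2m`, `2n` together with `k-2` fresh odd vertices. -/
def myEdge (k m n : ℕ) : Finset ℕ :=
  insert (2 * m) (insert (2 * n)
    ((Finset.range (k - 2)).image fun j => 2 * Nat.pair (Nat.pair m n) j + 1))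

lemma mem_myEdge {k m n v : ℕ} :
    v ∈ myEdge k m n ↔ v = 2 * m ∨ v = 2 * n ∨
      ∃ j < k - 2, v = 2 * Nat.pair (Nat.pair m n) j + 1 := by
  simp only [myEdge, Finset.mem_insert, Finset.mem_image, Finset.mem_range]
  constructor
  · rintro (h | h | ⟨j, hj, rfl⟩)
    · exact Or.inl h
    · exact Or.inr (Or.inl h)
    · exact Or.inr (Or.inr ⟨j, hj, rfl⟩)
  · rintro (h | h | ⟨j, hj, rfl⟩)
    · exact Or.inl h
    · exact Or.inr (Or.inl h)
    · exact Or.inr (Or.inr ⟨j, hj, rfl⟩)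

lemma odd_shared {k m n m' n' v : ℕ} (h1 : v ∈ myEdge k m n) (h2 : v ∈ myEdge k m' n')
    (hv : v % 2 = 1) : m = m' ∧ n = n' := by
  rw [mem_myEdge] at h1 h2
  rcases h1 with h1 | h1 | ⟨j, hj, rfl⟩ <;> try omega
  rcases h2 with h2 | h2 | ⟨j', hj', he⟩ <;> try omega
  have : Nat.pair (Nat.pair m n) j = Nat.pair (Nat.pair m' n') j' := by omega
  rw [Nat.pair_eq_pair] at this
  have := (Nat.pair_eq_pair.mp this.1)
  exact ⟨this.1, this.2⟩

lemma even_mem {k m n v : ℕ} (h : v ∈ myEdge k m n) (hv : v % 2 = 0) :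
    v = 2 * m ∨ v = 2 * n := by
  rw [mem_myEdge] at h
  rcases h with h | h | ⟨j, hj, rfl⟩ <;> omega

lemma myEdge_card {k m n : ℕ} (hk : 3 ≤ k) (hmn : m < n) : (myEdge k m n).card = k := by
  rw [myEdge]
  rw [Finset.card_insert_of_notMem, Finset.card_insert_of_notMem,
    Finset.card_image_of_injective _ (fun a b hab => by
      have := Nat.pair_eq_pair.mp (by omega : Nat.pair (Nat.pair m n) a = Nat.pair (Nat.pair m n) b)
      exact this.2), Finset.card_range]
  · omega
  · simp only [Finset.mem_image, Finset.mem_range]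
    rintro ⟨j, hj, he⟩; omega
  · simp only [Finset.mem_insert, Finset.mem_image, Finset.mem_range]
    rintro (h | ⟨j, hj, he⟩) <;> omega

def myE (k : ℕ) : Set (Finset ℕ) := { e | ∃ m n : ℕ, m < n ∧ e = myEdge k m n }

lemma myE_simple (k : ℕ) : SimpleHyper (myE k) := by
  rintro e ⟨m, n, hmn, rfl⟩ f ⟨m', n', hmn', rfl⟩ u v huv hue hve huf hvf
  rcases Nat.mod_two_eq_zero_or_one u with hu | hu
  · rcases Nat.mod_two_eq_zero_or_one v with hv | hv
    · -- both even
      have h1 := even_mem hue (by omega)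
      have h2 := even_mem hve (by omega)
      have h3 := even_mem huf (by omega)
      have h4 := even_mem hvf (by omega)
      have : m = m' ∧ n = n' := by
        rcases h1 with h1 | h1 <;> rcases h2 with h2 | h2 <;>
          rcases h3 with h3 | h3 <;> rcases h4 with h4 | h4 <;> omega
      rw [this.1, this.2]
    · obtain ⟨h1, h2⟩ := odd_shared hve hvf (by omega)
      rw [h1, h2]
  · obtain ⟨h1, h2⟩ := odd_shared hue huf (by omega)
    rw [h1, h2]

theorem stmt5 (k : ℕ) (hk : 3 ≤ k) :
    ∃ E : Set (Finset ℕ), (∀ e ∈ E, e.card = k) ∧ SimpleHyper E ∧ PropC E 2 ∧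
      ¬ ∃ x : List (Fin (k - 1)) → ℕ, Function.Injective x ∧ ∀ s, treeEdge k x s ∈ E := by
  refine ⟨myE k, ?_, myE_simple k, ?_, ?_⟩
  · rintro e ⟨m, n, hmn, rfl⟩
    exact myEdge_card hk hmn
  · -- PropC with V' = even numbers
    refine ⟨{v | v % 2 = 0}, ⟨0, rfl⟩, fun v hv => ?_⟩
    have hv' : v % 2 = 0 := hv
    obtain ⟨m, rfl⟩ : ∃ m, v = 2 * m := ⟨v / 2, by omega⟩
    apply Set.infinite_of_injective_forall_mem
      (f := fun i : ℕ => myEdge k m (m + 1 + i))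
    · intro i i' hii'
      have h1 : (2 * (m + 1 + i) : ℕ) ∈ myEdge k m (m + 1 + i) := by
        rw [mem_myEdge]; tauto
      have hb : myEdge k m (m + 1 + i) = myEdge k m (m + 1 + i') := hii'
      rw [hb] at h1
      have := even_mem h1 (by omega)
      omega
    · intro i
      refine ⟨⟨m, m + 1 + i, by omega, rfl⟩, by rw [mem_myEdge]; tauto, ?_⟩
      have hsub : ({2 * m, 2 * (m + 1 + i)} : Set ℕ) ⊆
          (myEdge k m (m + 1 + i) : Set ℕ) ∩ {v | v % 2 = 0} := by
        rintro w (rfl | rfl) <;>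
          exact ⟨by simp only [Finset.coe_insert, Finset.mem_coe]; rw [mem_myEdge]; tauto,
            by simp only [Set.mem_setOf_eq]; omega⟩
      calc (2 : ℕ) = ({2 * m, 2 * (m + 1 + i)} : Set ℕ).ncard :=
            (Set.ncard_pair (by omega)).symm
        _ ≤ _ := Set.ncard_le_ncard hsub
            (((myEdge k m (m + 1 + i)).finite_toSet).inter_of_left _)
  · -- no infinite (k-1)-branching tree
    rintro ⟨x, hinj, hx⟩
    have hk1 : 2 ≤ k - 1 := by omega
    -- every non-root vertex is even
    have heven : ∀ (a : Fin (k - 1)) (t : List (Fin (k - 1))), x (a :: t) % 2 = 0 := by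
      intro a t
      by_contra hodd
      obtain ⟨m, n, hmn, he⟩ := hx t
      obtain ⟨m', n', hmn', he'⟩ := hx (a :: t)
      have h1 : x (a :: t) ∈ treeEdge k x t := by
        simp only [treeEdge, Finset.mem_insert, Finset.mem_image, Finset.mem_univ]
        exact Or.inr ⟨a, trivial, rfl⟩
      have h2 : x (a :: t) ∈ treeEdge k x (a :: t) := by
        simp [treeEdge]
      rw [he] at h1; rw [he'] at h2
      obtain ⟨rfl, rfl⟩ := odd_shared h1 h2 (by omega)
      have : x t ∈ treeEdge k x (a :: t) := by
        rw [he', ← he]; simp [treeEdge]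
      simp only [treeEdge, Finset.mem_insert, Finset.mem_image, Finset.mem_univ,
        true_and] at this
      rcases this with h | ⟨b, h⟩
      · exact (by simp : t ≠ a :: t) (hinj h)
      · refine absurd (congrArg List.length (hinj h.symm)) ?_
        simp only [List.length_cons]
        omega
    -- an edge at a depth-1 node has k ≥ 3 even vertices, contradiction
    set b0 : Fin (k - 1) := ⟨0, by omega⟩
    set b1 : Fin (k - 1) := ⟨1, by omega⟩
    set s0 : List (Fin (k - 1)) := [b0]
    obtain ⟨m, n, hmn, he⟩ := hx s0
    have hmem : ∀ w ∈ treeEdge k x s0, w % 2 = 0 → w = 2 * m ∨ w = 2 * n := by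
      intro w hw hwe
      rw [he] at hw
      exact even_mem hw hwe
    have h0 : x s0 ∈ treeEdge k x s0 := by simp [treeEdge]
    have h1 : x (b0 :: s0) ∈ treeEdge k x s0 := by
      simp only [treeEdge, Finset.mem_insert, Finset.mem_image, Finset.mem_univ]
      exact Or.inr ⟨b0, trivial, rfl⟩
    have h2 : x (b1 :: s0) ∈ treeEdge k x s0 := by
      simp only [treeEdge, Finset.mem_insert, Finset.mem_image, Finset.mem_univ]
      exact Or.inr ⟨b1, trivial, rfl⟩
    have e0 := hmem _ h0 (heven b0 [])
    have e1 := hmem _ h1 (heven b0 s0)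
    have e2 := hmem _ h2 (heven b1 s0)
    have d01 : x s0 ≠ x (b0 :: s0) := fun h => (by simp : s0 ≠ b0 :: s0) (hinj h)
    have d02 : x s0 ≠ x (b1 :: s0) := fun h => (by simp : s0 ≠ b1 :: s0) (hinj h)
    have d12 : x (b0 :: s0) ≠ x (b1 :: s0) := fun h => by
      have := hinj h
      have : b0 = b1 := by simpa using this
      simp only [b0, b1, Fin.mk.injEq] at this
      omega
    rcases e0 with e0 | e0 <;> rcases e1 with e1 | e1 <;> rcases e2 with e2 | e2 <;> omega
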